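/- Let (X, ‖·‖ₙ) and (Y, |·|ₙ) be Fréchet spaces, U ⊆ X open, V ⊆ Y open and convex, and F : X ⇉ Y a set-valued map with closed graph. Assume there is κ > 0 such that D′F(x,y)(Πₛ(X)) ⊇ κ·Πₛ(Y) for all (x,y) ∈ (U × V) ∩ graph(F) and all s ∈ ℝ₊^∞. Then F is weakly Π-surjective on (U, V) with constant κ: whenever (x,y) ∈ (U × V) ∩ graph(F) and s ∈ ℝ₊^∞ satisfy x + Πₛ(X) ⊆ U, one has cl F(x + Πₛ(X)) ⊇ {y + κ·Πₛ(Y)} ∩ V. -/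

import Mathlib

open Filter Topology Set Pointwise

/-- The standard Fréchet metric built from a countable family of seminorms. -/
noncomputable def frechetRho {X : Type*} [AddCommGroup X] [Module ℝ X]
    (p : ℕ → Seminorm ℝ X) (x y : X) : ℝ :=
  ⨆ n, (2 : ℝ)⁻¹ ^ n * p n (x - y) / (1 + p n (x - y))

/-- `Πₛ(X) = {x : ‖x‖ₙ ≤ sₙ for all n}`. -/
def PiS {X : Type*} [AddCommGroup X] [Module ℝ X] (p : ℕ → Seminorm ℝ X) (s : ℕ → ℝ) :
    Set X := {x | ∀ n, p n x ≤ s n}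

/-- The contingent variation `D′F(x,y)(A)`: `v ∈ D′F(x,y)(A)` iff there are `tₖ ↓ 0`,
`aₖ ∈ A` and `zₖ ∈ F(x + tₖ aₖ)` with `ρ_Y(zₖ, y + tₖ v)/tₖ → 0`. -/
def contVar {X Y : Type*} [AddCommGroup X] [Module ℝ X] [AddCommGroup Y] [Module ℝ Y]
    (q : ℕ → Seminorm ℝ Y) (F : X → Set Y) (x : X) (y : Y) (A : Set X) : Set Y :=
  {v | ∃ (t : ℕ → ℝ) (a : ℕ → X) (z : ℕ → Y),
    (∀ k, 0 < t k) ∧ Filter.Tendsto t Filter.atTop (nhds 0) ∧ (∀ k, a k ∈ A) ∧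
    (∀ k, z k ∈ F (x + t k • a k)) ∧
    Filter.Tendsto (fun k => frechetRho q (z k) (y + t k • v) / t k) Filter.atTop (nhds 0)}

/-- The `ρ`-closure of a set. -/
def rhoClosure {Y : Type*} [AddCommGroup Y] [Module ℝ Y] (q : ℕ → Seminorm ℝ Y)
    (A : Set Y) : Set Y := {y | ∀ ε > (0 : ℝ), ∃ a ∈ A, frechetRho q a y < ε}

/-- Openness with respect to the Fréchet metric `ρ`. -/
def RhoOpen {X : Type*} [AddCommGroup X] [Module ℝ X] (p : ℕ → Seminorm ℝ X)
    (U : Set X) : Prop := ∀ x ∈ U, ∃ ε > (0 : ℝ), ∀ x', frechetRho p x x' < ε → x' ∈ U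

namespace Stmt13Aux

/-- one term of the Fréchet metric -/
noncomputable def trm (n : ℕ) (x : ℝ) : ℝ := (2 : ℝ)⁻¹ ^ n * x / (1 + x)

lemma frechetRho_def {Z : Type*} [AddCommGroup Z] [Module ℝ Z] (q : ℕ → Seminorm ℝ Z)
    (a b : Z) : frechetRho q a b = ⨆ n, trm n (q n (a - b)) := rfl

lemma trm_nonneg (n : ℕ) {x : ℝ} (hx : 0 ≤ x) : 0 ≤ trm n x := by
  unfold trm; positivity

lemma trm_le_pow (n : ℕ) {x : ℝ} (hx : 0 ≤ x) : trm n x ≤ (2 : ℝ)⁻¹ ^ n := by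
  unfold trm
  have h : (0:ℝ) < 1 + x := by linarith
  rw [div_le_iff₀ h]
  nlinarith [pow_nonneg (by norm_num : (0:ℝ) ≤ 2⁻¹) n]

lemma trm_le_one (n : ℕ) {x : ℝ} (hx : 0 ≤ x) : trm n x ≤ 1 :=
  le_trans (trm_le_pow n hx) (pow_le_one₀ (by norm_num) (by norm_num))

lemma trm_mono (n : ℕ) {a b : ℝ} (ha : 0 ≤ a) (hab : a ≤ b) : trm n a ≤ trm n b := by
  unfold trm
  have h1 : (0:ℝ) < 1 + a := by linarith
  have h2 : (0:ℝ) < 1 + b := by linarith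
  rw [div_le_div_iff₀ h1 h2]
  nlinarith [pow_nonneg (by norm_num : (0:ℝ) ≤ 2⁻¹) n]

lemma trm_subadd (n : ℕ) {a b : ℝ} (ha : 0 ≤ a) (hb : 0 ≤ b) :
    trm n (a + b) ≤ trm n a + trm n b := by
  unfold trm
  have h1 : (0:ℝ) < 1 + a := by linarith
  have h2 : (0:ℝ) < 1 + b := by linarith
  have h3 : (0:ℝ) < 1 + (a + b) := by linarith
  rw [div_add_div _ _ (ne_of_gt h1) (ne_of_gt h2), div_le_div_iff₀ h3 (by positivity)]
  have hc : (0:ℝ) ≤ (2:ℝ)⁻¹ ^ n := pow_nonneg (by norm_num) n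
  nlinarith [mul_nonneg (mul_nonneg hc (mul_nonneg ha hb)) (show (0:ℝ) ≤ 2 + a + b by linarith)]

lemma trm_le_self (n : ℕ) {x : ℝ} (hx : 0 ≤ x) : trm n x ≤ x := by
  unfold trm
  have h : (0:ℝ) < 1 + x := by linarith
  rw [div_le_iff₀ h]
  nlinarith [pow_le_one₀ (by norm_num : (0:ℝ) ≤ 2⁻¹) (by norm_num : (2:ℝ)⁻¹ ≤ 1) (n := n),
    pow_nonneg (by norm_num : (0:ℝ) ≤ 2⁻¹) n]

lemma trm_pos (n : ℕ) {x : ℝ} (hx : 0 < x) : 0 < trm n x := by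
  unfold trm; positivity

variable {Z : Type*} [AddCommGroup Z] [Module ℝ Z] (q : ℕ → Seminorm ℝ Z)

lemma rho_bdd (a b : Z) : BddAbove (Set.range fun n => trm n (q n (a - b))) := by
  refine ⟨1, ?_⟩
  rintro _ ⟨n, rfl⟩
  exact trm_le_one n (apply_nonneg _ _)

lemma trm_le_rho (a b : Z) (n : ℕ) : trm n (q n (a - b)) ≤ frechetRho q a b := by
  rw [frechetRho_def]
  exact le_ciSup (rho_bdd q a b) n

lemma rho_nonneg (a b : Z) : 0 ≤ frechetRho q a b := by
  rw [frechetRho_def]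
  exact Real.iSup_nonneg fun n => trm_nonneg n (apply_nonneg _ _)

lemma rho_le (a b : Z) {C : ℝ} (h : ∀ n, trm n (q n (a - b)) ≤ C) : frechetRho q a b ≤ C := by
  rw [frechetRho_def]; exact ciSup_le h

lemma rho_congr {a b a' b' : Z} (h : a - b = a' - b') :
    frechetRho q a b = frechetRho q a' b' := by
  rw [frechetRho_def, frechetRho_def, h]

lemma rho_comm (a b : Z) : frechetRho q a b = frechetRho q b a := by
  rw [frechetRho_def, frechetRho_def]
  have : ∀ n, q n (a - b) = q n (b - a) := fun n => map_sub_rev (q n) a b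
  simp_rw [this]

lemma rho_self (a : Z) : frechetRho q a a = 0 := by
  rw [frechetRho_def]
  simp [trm]

lemma rho_triangle (a b c : Z) :
    frechetRho q a c ≤ frechetRho q a b + frechetRho q b c := by
  apply rho_le
  intro n
  have h1 : q n (a - c) ≤ q n (a - b) + q n (b - c) := by
    have : a - c = (a - b) + (b - c) := by abel
    rw [this]; exact map_add_le_add _ _ _
  calc trm n (q n (a - c)) ≤ trm n (q n (a - b) + q n (b - c)) :=
        trm_mono n (apply_nonneg _ _) h1
    _ ≤ trm n (q n (a - b)) + trm n (q n (b - c)) :=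
        trm_subadd n (apply_nonneg _ _) (apply_nonneg _ _)
    _ ≤ frechetRho q a b + frechetRho q b c :=
        add_le_add (trm_le_rho q a b n) (trm_le_rho q b c n)

lemma seminorm_lt_of_rho_lt {a b : Z} {n : ℕ} {γ : ℝ} (hγ : 0 < γ)
    (h : frechetRho q a b < trm n γ) : q n (a - b) < γ := by
  by_contra hc
  push_neg at hc
  exact absurd (lt_of_le_of_lt ((trm_mono n hγ.le hc).trans (trm_le_rho q a b n)) h)
    (lt_irrefl _)

/-- modulus-of-continuity lemma -/
lemma omega_small (c : ℕ → ℝ) (hc : ∀ n, 0 ≤ c n) {η : ℝ} (hη : 0 < η) :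
    ∃ δ > 0, ∀ (d : Z) (t : ℝ), 0 ≤ t → t ≤ δ → (∀ n, q n d ≤ t * c n) →
      frechetRho q d 0 < η := by
  obtain ⟨N, hN⟩ : ∃ N : ℕ, (2:ℝ)⁻¹ ^ N < η / 2 :=
    exists_pow_lt_of_lt_one (by positivity) (by norm_num)
  set M : ℝ := (∑ n ∈ Finset.range (N + 1), c n) + 1 with hM
  have hMpos : 0 < M := by
    have : 0 ≤ ∑ n ∈ Finset.range (N + 1), c n := Finset.sum_nonneg fun n _ => hc n
    linarith
  have hcM : ∀ n ≤ N, c n ≤ M := by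
    intro n hn
    have : c n ≤ ∑ m ∈ Finset.range (N + 1), c m :=
      Finset.single_le_sum (fun m _ => hc m) (Finset.mem_range.2 (by omega))
    linarith
  refine ⟨η / (2 * M), by positivity, ?_⟩
  intro d t ht htδ hqd
  have : frechetRho q d 0 ≤ η / 2 := by
    apply rho_le
    intro n
    rw [sub_zero]
    rcases le_or_gt n N with hn | hn
    · calc trm n (q n d) ≤ q n d := trm_le_self n (apply_nonneg _ _)
        _ ≤ t * c n := hqd n
        _ ≤ (η / (2 * M)) * M := by
            apply mul_le_mul htδ (hcM n hn) (hc n) (by positivity)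
        _ = η / 2 := by field_simp
    · calc trm n (q n d) ≤ (2:ℝ)⁻¹ ^ n := trm_le_pow n (apply_nonneg _ _)
        _ ≤ (2:ℝ)⁻¹ ^ N := pow_le_pow_of_le_one (by norm_num) (by norm_num) hn.le
        _ ≤ η / 2 := hN.le
  linarith

/-- An admissible state of the Zorn construction. -/
def Good {X Y : Type*} [AddCommGroup X] [Module ℝ X] [AddCommGroup Y] [Module ℝ Y]
    (p : ℕ → Seminorm ℝ X) (q : ℕ → Seminorm ℝ Y) (F : X → Set Y) (x : X) (y : Y)
    (s : ℕ → ℝ) (v : Y) (ε : ℝ) (e : ℝ × X × Y) : Prop :=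
  0 ≤ e.1 ∧ e.1 ≤ 1 ∧ (∀ n, p n e.2.1 ≤ e.1 * s n) ∧ e.2.2 ∈ F (x + e.2.1) ∧
    frechetRho q e.2.2 (y + e.1 • v) ≤ ε * e.1 / 4

/-- The order used in the Zorn construction. -/
def Rel {X Y : Type*} [AddCommGroup X] [Module ℝ X] [AddCommGroup Y] [Module ℝ Y]
    (p : ℕ → Seminorm ℝ X) (q : ℕ → Seminorm ℝ Y)
    (s : ℕ → ℝ) (v : Y) (ε : ℝ) (e e' : ℝ × X × Y) : Prop :=
  e.1 ≤ e'.1 ∧ (∀ n, p n (e'.2.1 - e.2.1) ≤ (e'.1 - e.1) * s n) ∧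
    frechetRho q e'.2.2 (e.2.2 + (e'.1 - e.1) • v) ≤ ε * (e'.1 - e.1) / 4

section RelLemmas

variable {X Y : Type*} [AddCommGroup X] [Module ℝ X] [AddCommGroup Y] [Module ℝ Y]
    (p : ℕ → Seminorm ℝ X) (q : ℕ → Seminorm ℝ Y) (s : ℕ → ℝ) (v : Y) (ε : ℝ)

lemma rel_refl (e : ℝ × X × Y) : Rel p q s v ε e e := by
  refine ⟨le_refl _, fun n => ?_, ?_⟩
  · simp
  · simp [rho_self]

lemma rel_trans {a b c : ℝ × X × Y} (hab : Rel p q s v ε a b) (hbc : Rel p q s v ε b c) :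
    Rel p q s v ε a c := by
  obtain ⟨h1, h2, h3⟩ := hab
  obtain ⟨h1', h2', h3'⟩ := hbc
  refine ⟨le_trans h1 h1', fun n => ?_, ?_⟩
  · have : c.2.1 - a.2.1 = (c.2.1 - b.2.1) + (b.2.1 - a.2.1) := by abel
    calc p n (c.2.1 - a.2.1) ≤ p n (c.2.1 - b.2.1) + p n (b.2.1 - a.2.1) := by
          rw [this]; exact map_add_le_add _ _ _
      _ ≤ (c.1 - b.1) * s n + (b.1 - a.1) * s n := add_le_add (h2' n) (h2 n)
      _ = (c.1 - a.1) * s n := by ring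
  · have key : frechetRho q (b.2.2 + (c.1 - b.1) • v) (a.2.2 + (c.1 - a.1) • v)
        = frechetRho q b.2.2 (a.2.2 + (b.1 - a.1) • v) := by
      apply rho_congr
      module
    calc frechetRho q c.2.2 (a.2.2 + (c.1 - a.1) • v)
        ≤ frechetRho q c.2.2 (b.2.2 + (c.1 - b.1) • v)
          + frechetRho q (b.2.2 + (c.1 - b.1) • v) (a.2.2 + (c.1 - a.1) • v) :=
          rho_triangle _ _ _ _
      _ = frechetRho q c.2.2 (b.2.2 + (c.1 - b.1) • v)
          + frechetRho q b.2.2 (a.2.2 + (b.1 - a.1) • v) := by rw [key]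
      _ ≤ ε * (c.1 - b.1) / 4 + ε * (b.1 - a.1) / 4 := add_le_add h3' h3
      _ = ε * (c.1 - a.1) / 4 := by ring

lemma rel_flip {a b : ℝ × X × Y} (h : Rel p q s v ε a b) (hle : b.1 ≤ a.1) :
    Rel p q s v ε b a := by
  obtain ⟨h1, h2, h3⟩ := h
  have heq : a.1 = b.1 := le_antisymm h1 hle
  refine ⟨hle, fun n => ?_, ?_⟩
  · rw [map_sub_rev]
    calc p n (b.2.1 - a.2.1) ≤ (b.1 - a.1) * s n := h2 n
      _ = (a.1 - b.1) * s n := by rw [heq]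
  · have hz : frechetRho q b.2.2 a.2.2 ≤ 0 := by
      have := h3
      rw [heq, sub_self, zero_smul, add_zero] at this
      linarith
    have hz' : frechetRho q a.2.2 b.2.2 = 0 :=
      le_antisymm (by rw [rho_comm]; exact hz) (rho_nonneg _ _ _)
    rw [heq, sub_self, zero_smul, add_zero, hz']
    simp

end RelLemmas

/-- A uniform `ρ`-radius around the segment `[y, y+v]` inside `V`. -/
lemma uniform_radius {Y : Type*} [AddCommGroup Y] [Module ℝ Y]
    (q : ℕ → Seminorm ℝ Y) (V : Set Y) (hV : RhoOpen q V) (y v : Y)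
    (hseg : ∀ μ : ℝ, 0 ≤ μ → μ ≤ 1 → y + μ • v ∈ V) :
    ∃ ρ₀ > (0:ℝ), ∀ μ : ℝ, 0 ≤ μ → μ ≤ 1 → ∀ z, frechetRho q z (y + μ • v) < ρ₀ → z ∈ V := by
  have hmem : ∀ i : Icc (0:ℝ) 1, y + (i:ℝ) • v ∈ V := fun i => hseg i i.2.1 i.2.2
  choose r hrpos hrball using fun i : Icc (0:ℝ) 1 => hV (y + (i:ℝ) • v) (hmem i)
  choose δ hδpos hδ using fun i : Icc (0:ℝ) 1 =>
    omega_small q (fun n => q n v) (fun n => apply_nonneg _ _) (half_pos (hrpos i))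
  have hcov : Icc (0:ℝ) 1 ⊆ ⋃ i : Icc (0:ℝ) 1, Ioo ((i:ℝ) - δ i) ((i:ℝ) + δ i) := by
    intro μ hμ
    refine mem_iUnion.2 ⟨⟨μ, hμ⟩, ?_⟩
    have := hδpos ⟨μ, hμ⟩
    exact ⟨by linarith, by linarith⟩
  obtain ⟨T, hT⟩ := isCompact_Icc.elim_finite_subcover _ (fun i => isOpen_Ioo) hcov
  have h0T : (0:ℝ) ∈ ⋃ i ∈ T, Ioo ((i:ℝ) - δ i) ((i:ℝ) + δ i) :=
    hT (left_mem_Icc.2 zero_le_one)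
  obtain ⟨i₀, hi₀, _⟩ := mem_iUnion₂.1 h0T
  have hTne : T.Nonempty := ⟨i₀, hi₀⟩
  refine ⟨T.inf' hTne (fun i => r i / 2), (Finset.lt_inf'_iff _).2 fun i _ => half_pos (hrpos i),
    ?_⟩
  intro μ h0 h1 z hz
  obtain ⟨i, hiT, hμi⟩ := mem_iUnion₂.1 (hT (mem_Icc.2 ⟨h0, h1⟩))
  apply hrball i
  have habs : |(i:ℝ) - μ| ≤ δ i := by
    rw [abs_le]
    exact ⟨by linarith [hμi.2], by linarith [hμi.1]⟩
  have hωd : frechetRho q (((i:ℝ) - μ) • v) 0 < r i / 2 := by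
    apply hδ i _ |(i:ℝ) - μ| (abs_nonneg _) habs
    intro n
    rw [map_smul_eq_mul, Real.norm_eq_abs]
  have hsplit : frechetRho q (y + (i:ℝ) • v) (y + μ • v) = frechetRho q (((i:ℝ) - μ) • v) 0 := by
    apply rho_congr
    rw [sub_zero]
    module
  calc frechetRho q (y + (i:ℝ) • v) z
      ≤ frechetRho q (y + (i:ℝ) • v) (y + μ • v) + frechetRho q (y + μ • v) z :=
        rho_triangle _ _ _ _
    _ = frechetRho q (((i:ℝ) - μ) • v) 0 + frechetRho q z (y + μ • v) := by
        rw [hsplit, rho_comm q (y + μ • v) z]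
    _ < r i / 2 + T.inf' hTne (fun i => r i / 2) := add_lt_add hωd hz
    _ ≤ r i / 2 + r i / 2 := by
        have := Finset.inf'_le (fun i => r i / 2) hiT
        linarith
    _ = r i := by ring

end Stmt13Aux

open Stmt13Aux in
theorem stmt13 {X Y : Type*} [AddCommGroup X] [Module ℝ X] [AddCommGroup Y] [Module ℝ Y]
    (p : ℕ → Seminorm ℝ X) (q : ℕ → Seminorm ℝ Y)
    (hsepX : ∀ x : X, (∀ n, p n x = 0) → x = 0)
    (hsepY : ∀ y : Y, (∀ n, q n y = 0) → y = 0)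
    (hcompX : ∀ u : ℕ → X,
      (∀ ε > (0 : ℝ), ∃ N, ∀ m ≥ N, ∀ k ≥ N, frechetRho p (u m) (u k) < ε) →
      ∃ x : X, Tendsto (fun k => frechetRho p (u k) x) atTop (𝓝 0))
    (hcompY : ∀ u : ℕ → Y,
      (∀ ε > (0 : ℝ), ∃ N, ∀ m ≥ N, ∀ k ≥ N, frechetRho q (u m) (u k) < ε) →
      ∃ y : Y, Tendsto (fun k => frechetRho q (u k) y) atTop (𝓝 0))
    (F : X → Set Y)
    (hgraph : ∀ (u : ℕ → X) (w : ℕ → Y) (x : X) (y : Y), (∀ k, w k ∈ F (u k)) →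
      Tendsto (fun k => frechetRho p (u k) x) atTop (𝓝 0) →
      Tendsto (fun k => frechetRho q (w k) y) atTop (𝓝 0) → y ∈ F x)
    (U : Set X) (V : Set Y) (hU : RhoOpen p U) (hV : RhoOpen q V) (hVconv : Convex ℝ V)
    (κ : ℝ) (hκ : 0 < κ)
    (hD : ∀ x y, y ∈ F x → x ∈ U → y ∈ V → ∀ s : ℕ → ℝ, (∀ n, 0 ≤ s n) →
      PiS q (fun n => κ * s n) ⊆ contVar q F x y (PiS p s)) :
    ∀ x y, y ∈ F x → x ∈ U → y ∈ V → ∀ s : ℕ → ℝ, (∀ n, 0 ≤ s n) →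
      (∀ u ∈ PiS p s, x + u ∈ U) →
      ∀ v ∈ PiS q (fun n => κ * s n), y + v ∈ V →
        y + v ∈ rhoClosure q (⋃ u ∈ PiS p s, F (x + u)) := by
  intro x y hyF hxU hyV s hs hUx v hv hyvV
  intro ε hε
  classical
  -- the segment `[y, y+v]` lies in `V`
  have hseg : ∀ μ : ℝ, 0 ≤ μ → μ ≤ 1 → y + μ • v ∈ V := by
    intro μ h0 h1
    have h := hVconv hyV hyvV (by linarith : (0:ℝ) ≤ 1 - μ) h0 (by ring)
    have heq : (1 - μ) • y + μ • (y + v) = y + μ • v := by module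
    rwa [heq] at h
  obtain ⟨ρ₀, hρ₀, hball⟩ := uniform_radius q V hV y v hseg
  set ε' := min ε ρ₀ with hε'def
  have hε' : 0 < ε' := lt_min hε hρ₀
  -- Zorn's lemma on admissible states
  have hchains : ∀ c : Set {e : ℝ × X × Y // Good p q F x y s v ε' e},
      IsChain (fun a b => Rel p q s v ε' a.val b.val) c →
      ∃ ub : {e : ℝ × X × Y // Good p q F x y s v ε' e}, ∀ a ∈ c, Rel p q s v ε' a.val ub.val := by
    intro c hc
    have base : Good p q F x y s v ε' (0, 0, y) := by
      refine ⟨le_refl _, zero_le_one, fun n => by simp, by simpa using hyF, ?_⟩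
      simp [rho_self]
    rcases Set.eq_empty_or_nonempty c with rfl | hcne
    · exact ⟨⟨(0, 0, y), base⟩, fun a ha => absurd ha (Set.notMem_empty a)⟩
    set S : Set ℝ :=
      (fun e : {e : ℝ × X × Y // Good p q F x y s v ε' e} => e.val.1) '' c with hSdef
    have hSne : S.Nonempty := hcne.image _
    have hSbdd : BddAbove S := ⟨1, by rintro _ ⟨e, _, rfl⟩; exact e.2.2.1⟩
    set Λ := sSup S with hΛdef
    have hΛ1 : Λ ≤ 1 := csSup_le hSne (by rintro _ ⟨e, _, rfl⟩; exact e.2.2.1)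
    have hΛ0 : 0 ≤ Λ := by
      obtain ⟨e, hec⟩ := hcne
      exact le_trans e.2.1 (le_csSup hSbdd ⟨e, hec, rfl⟩)
    by_cases hatt : ∃ e ∈ c, e.val.1 = Λ
    · obtain ⟨e₀, he₀c, he₀⟩ := hatt
      refine ⟨e₀, fun a ha => ?_⟩
      rcases eq_or_ne a e₀ with rfl | hne
      · exact rel_refl p q s v ε' _
      rcases hc ha he₀c hne with h | h
      · exact h
      · exact rel_flip p q s v ε' h (by rw [he₀]; exact le_csSup hSbdd ⟨a, ha, rfl⟩)
    · push_neg at hatt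
      have hexists : ∀ j : ℕ, ∃ e, e ∈ c ∧ Λ - 1/(j+1) < e.val.1 := by
        intro j
        have hpos : (0:ℝ) < 1/(j+1) := by positivity
        obtain ⟨b, hbS, hb⟩ := exists_lt_of_lt_csSup hSne
          (show Λ - 1/(j+1:ℝ) < Λ by linarith)
        obtain ⟨e, hec, rfl⟩ := hbS
        exact ⟨e, hec, hb⟩
      choose E hEc hEl using hexists
      have hlamlt : ∀ j, (E j).val.1 < Λ := fun j =>
        lt_of_le_of_ne (le_csSup hSbdd ⟨E j, hEc j, rfl⟩) (hatt (E j) (hEc j))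
      have hmono : ∀ i j, (E i).val.1 ≤ (E j).val.1 →
          Rel p q s v ε' (E i).val (E j).val := by
        intro i j hij
        rcases eq_or_ne (E i) (E j) with h | hne
        · rw [h]; exact rel_refl p q s v ε' _
        rcases hc (hEc i) (hEc j) hne with h | h
        · exact h
        · exact rel_flip p q s v ε' h hij
      have hgap : ∀ N : ℕ, ∀ j ≥ N, Λ - 1/(N+1) < (E j).val.1 := by
        intro N j hj
        have hcast : (N:ℝ) + 1 ≤ (j:ℝ) + 1 := by
          have := (Nat.cast_le (α := ℝ)).2 hj; linarith
        have h1 : (1:ℝ)/(j+1) ≤ 1/(N+1) :=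
          one_div_le_one_div_of_le (by positivity) hcast
        linarith [hEl j]
      -- Cauchy in Y
      have hcauY : ∀ η > (0:ℝ), ∃ N, ∀ m ≥ N, ∀ k ≥ N,
          frechetRho q ((E m).val.2.2) ((E k).val.2.2) < η := by
        intro η hη
        obtain ⟨δ, hδpos, hδ⟩ :=
          omega_small q (fun n => q n v) (fun n => apply_nonneg _ _) (half_pos hη)
        obtain ⟨N, hN⟩ := exists_nat_one_div_lt
          (show (0:ℝ) < min δ (η/ε') from lt_min hδpos (by positivity))
        refine ⟨N, ?_⟩
        have key : ∀ m k, N ≤ m → N ≤ k → (E k).val.1 ≤ (E m).val.1 →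
            frechetRho q ((E m).val.2.2) ((E k).val.2.2) < η := by
          intro m k hm hk hkm
          have hrel := hmono k m hkm
          have hg0 : 0 ≤ (E m).val.1 - (E k).val.1 := sub_nonneg.2 hkm
          have hglt : (E m).val.1 - (E k).val.1 < 1/(N+1) := by
            have h1 := hgap N k hk
            have h2 := hlamlt m
            linarith
          have hgδ : (E m).val.1 - (E k).val.1 ≤ δ :=
            le_of_lt (lt_of_lt_of_le hglt (hN.le.trans (min_le_left _ _)))
          have hω : frechetRho q (((E m).val.1 - (E k).val.1) • v) 0 < η/2 := by
            apply hδ _ _ hg0 hgδ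
            intro n
            rw [map_smul_eq_mul, Real.norm_eq_abs, abs_of_nonneg hg0]
          have h2 : frechetRho q ((E k).val.2.2 + ((E m).val.1 - (E k).val.1) • v)
              ((E k).val.2.2) = frechetRho q (((E m).val.1 - (E k).val.1) • v) 0 := by
            apply rho_congr
            module
          have h3 := hrel.2.2
          have h4 : ε' * ((E m).val.1 - (E k).val.1) / 4 < η / 2 := by
            have hgη : (E m).val.1 - (E k).val.1 < η/ε' :=
              lt_of_lt_of_le hglt (hN.le.trans (min_le_right _ _))
            have := mul_lt_mul_of_pos_left hgη hε'
            rw [mul_div_cancel₀ _ (ne_of_gt hε')] at this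
            linarith
          calc frechetRho q (E m).val.2.2 (E k).val.2.2
              ≤ frechetRho q (E m).val.2.2 ((E k).val.2.2 + ((E m).val.1 - (E k).val.1) • v)
                + frechetRho q ((E k).val.2.2 + ((E m).val.1 - (E k).val.1) • v)
                  ((E k).val.2.2) := rho_triangle _ _ _ _
            _ < ε' * ((E m).val.1 - (E k).val.1) / 4 + η/2 := by
                rw [h2]; exact add_lt_add_of_le_of_lt h3 hω
            _ < η/2 + η/2 := by linarith
            _ = η := by ring
        intro m hm k hk
        rcases le_total ((E k).val.1) ((E m).val.1) with h | h
        · exact key m k hm hk h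
        · rw [rho_comm]; exact key k m hk hm h
      obtain ⟨wbar, hwbar⟩ := hcompY (fun j => (E j).val.2.2) hcauY
      -- Cauchy in X
      have hcauX : ∀ η > (0:ℝ), ∃ N, ∀ m ≥ N, ∀ k ≥ N,
          frechetRho p ((E m).val.2.1) ((E k).val.2.1) < η := by
        intro η hη
        obtain ⟨δ, hδpos, hδ⟩ := omega_small p s hs hη
        obtain ⟨N, hN⟩ := exists_nat_one_div_lt hδpos
        refine ⟨N, ?_⟩
        have key : ∀ m k, N ≤ m → N ≤ k → (E k).val.1 ≤ (E m).val.1 →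
            frechetRho p ((E m).val.2.1) ((E k).val.2.1) < η := by
          intro m k hm hk hkm
          have hrel := hmono k m hkm
          have hg0 : 0 ≤ (E m).val.1 - (E k).val.1 := sub_nonneg.2 hkm
          have hglt : (E m).val.1 - (E k).val.1 < 1/(N+1) := by
            have h1 := hgap N k hk
            have h2 := hlamlt m
            linarith
          have hρeq : frechetRho p (E m).val.2.1 (E k).val.2.1
              = frechetRho p ((E m).val.2.1 - (E k).val.2.1) 0 :=
            rho_congr p (by rw [sub_zero])
          rw [hρeq]
          exact hδ _ _ hg0 (le_of_lt (lt_of_lt_of_le hglt hN.le)) hrel.2.1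
        intro m hm k hk
        rcases le_total ((E k).val.1) ((E m).val.1) with h | h
        · exact key m k hm hk h
        · rw [rho_comm]; exact key k m hk hm h
      obtain ⟨ubar, hubar⟩ := hcompX (fun j => (E j).val.2.1) hcauX
      -- limit bounds
      have hkeyU : ∀ j n, p n (ubar - (E j).val.2.1) ≤ (Λ - (E j).val.1) * s n := by
        intro j n
        apply le_of_forall_pos_le_add
        intro γ hγ
        have h1 : ∀ᶠ m in atTop, frechetRho p ((E m).val.2.1) ubar < trm n γ :=
          hubar.eventually_lt_const (trm_pos n hγ)
        have h2 : ∀ᶠ (m : ℕ) in atTop, (E j).val.1 ≤ (E m).val.1 := by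
          obtain ⟨M, hM⟩ := exists_nat_one_div_lt (sub_pos.2 (hlamlt j))
          filter_upwards [eventually_ge_atTop M] with m hm
          have := hgap M m hm
          linarith
        obtain ⟨m, hm1, hm2⟩ := (h1.and h2).exists
        have h3 : p n ((E m).val.2.1 - ubar) < γ := seminorm_lt_of_rho_lt p hγ hm1
        have h4 := (hmono j m hm2).2.1 n
        have h5 : p n (ubar - (E j).val.2.1)
            ≤ p n (ubar - (E m).val.2.1) + p n ((E m).val.2.1 - (E j).val.2.1) := by
          have heq : ubar - (E j).val.2.1
              = (ubar - (E m).val.2.1) + ((E m).val.2.1 - (E j).val.2.1) := by abel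
          rw [heq]; exact map_add_le_add _ _ _
        have h6 : p n (ubar - (E m).val.2.1) = p n ((E m).val.2.1 - ubar) :=
          map_sub_rev _ _ _
        have h7 : ((E m).val.1 - (E j).val.1) * s n ≤ (Λ - (E j).val.1) * s n := by
          apply mul_le_mul_of_nonneg_right _ (hs n)
          linarith [hlamlt m]
        linarith
      have hkeyW : ∀ j, frechetRho q wbar ((E j).val.2.2 + (Λ - (E j).val.1) • v)
          ≤ ε' * (Λ - (E j).val.1) / 4 := by
        intro j
        apply le_of_forall_pos_le_add
        intro γ hγ
        obtain ⟨δ, hδpos, hδ⟩ := omega_small q (fun n => q n v)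
          (fun n => apply_nonneg _ _) (show (0:ℝ) < γ/2 by positivity)
        have h1 : ∀ᶠ m in atTop, frechetRho q ((E m).val.2.2) wbar < γ/2 :=
          hwbar.eventually_lt_const (by positivity)
        have h2 : ∀ᶠ (m : ℕ) in atTop, (E j).val.1 ≤ (E m).val.1 := by
          obtain ⟨M, hM⟩ := exists_nat_one_div_lt (sub_pos.2 (hlamlt j))
          filter_upwards [eventually_ge_atTop M] with m hm
          have := hgap M m hm
          linarith
        have h3 : ∀ᶠ (m : ℕ) in atTop, Λ - (E m).val.1 ≤ δ := by
          obtain ⟨M, hM⟩ := exists_nat_one_div_lt hδpos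
          filter_upwards [eventually_ge_atTop M] with m hm
          have := hgap M m hm
          linarith
        obtain ⟨m, hm1, hm2, hm3⟩ := (h1.and (h2.and h3)).exists
        have t2 := (hmono j m hm2).2.2
        have t3 : frechetRho q ((E j).val.2.2 + ((E m).val.1 - (E j).val.1) • v)
            ((E j).val.2.2 + (Λ - (E j).val.1) • v)
            = frechetRho q (((E m).val.1 - Λ) • v) 0 := by
          apply rho_congr
          module
        have t4 : frechetRho q (((E m).val.1 - Λ) • v) 0 < γ/2 := by
          apply hδ _ (Λ - (E m).val.1) (by linarith [hlamlt m]) hm3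
          intro n
          rw [map_smul_eq_mul, Real.norm_eq_abs,
            abs_of_nonpos (by linarith [hlamlt m] : (E m).val.1 - Λ ≤ 0), neg_sub]
        have t5 : ε' * ((E m).val.1 - (E j).val.1) / 4 ≤ ε' * (Λ - (E j).val.1) / 4 := by
          have h := hlamlt m
          have : ε' * ((E m).val.1 - (E j).val.1) ≤ ε' * (Λ - (E j).val.1) :=
            mul_le_mul_of_nonneg_left (by linarith) hε'.le
          linarith
        have t6 : frechetRho q wbar ((E m).val.2.2)
            = frechetRho q ((E m).val.2.2) wbar := rho_comm _ _ _
        calc frechetRho q wbar ((E j).val.2.2 + (Λ - (E j).val.1) • v)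
            ≤ frechetRho q wbar ((E j).val.2.2 + ((E m).val.1 - (E j).val.1) • v)
              + frechetRho q ((E j).val.2.2 + ((E m).val.1 - (E j).val.1) • v)
                ((E j).val.2.2 + (Λ - (E j).val.1) • v) := rho_triangle _ _ _ _
          _ ≤ (frechetRho q wbar ((E m).val.2.2)
              + frechetRho q ((E m).val.2.2)
                ((E j).val.2.2 + ((E m).val.1 - (E j).val.1) • v))
              + frechetRho q ((E j).val.2.2 + ((E m).val.1 - (E j).val.1) • v)
                ((E j).val.2.2 + (Λ - (E j).val.1) • v) :=
              add_le_add_left (rho_triangle _ _ _ _) _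
          _ ≤ (γ/2 + ε' * ((E m).val.1 - (E j).val.1) / 4) + γ/2 := by
              rw [t3]
              exact add_le_add (add_le_add (by rw [t6]; exact hm1.le) t2) t4.le
          _ ≤ ε' * (Λ - (E j).val.1) / 4 + γ := by linarith
      -- the limit point
      have hFbar : wbar ∈ F (x + ubar) := by
        apply hgraph (fun j => x + (E j).val.2.1) (fun j => (E j).val.2.2) _ _
          (fun j => (E j).2.2.2.2.1)
        · have heq : (fun j : ℕ => frechetRho p (x + (E j).val.2.1) (x + ubar))
              = fun j => frechetRho p ((E j).val.2.1) ubar := by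
            funext j
            exact rho_congr p (by abel)
          exact heq ▸ hubar
        · exact hwbar
      have hGoodbar : Good p q F x y s v ε' (Λ, ubar, wbar) := by
        refine ⟨hΛ0, hΛ1, fun n => ?_, hFbar, ?_⟩
        · have heq : ubar = (E 0).val.2.1 + (ubar - (E 0).val.2.1) := by abel
          calc p n ubar = p n ((E 0).val.2.1 + (ubar - (E 0).val.2.1)) := by rw [← heq]
            _ ≤ p n ((E 0).val.2.1) + p n (ubar - (E 0).val.2.1) := map_add_le_add _ _ _
            _ ≤ (E 0).val.1 * s n + (Λ - (E 0).val.1) * s n :=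
                add_le_add ((E 0).2.2.2.1 n) (hkeyU 0 n)
            _ = Λ * s n := by ring
        · calc frechetRho q wbar (y + Λ • v)
              ≤ frechetRho q wbar ((E 0).val.2.2 + (Λ - (E 0).val.1) • v)
                + frechetRho q ((E 0).val.2.2 + (Λ - (E 0).val.1) • v) (y + Λ • v) :=
                rho_triangle _ _ _ _
            _ ≤ ε' * (Λ - (E 0).val.1) / 4 + ε' * (E 0).val.1 / 4 := by
                refine add_le_add (hkeyW 0) ?_
                have heq : frechetRho q ((E 0).val.2.2 + (Λ - (E 0).val.1) • v) (y + Λ • v)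
                    = frechetRho q ((E 0).val.2.2) (y + (E 0).val.1 • v) := by
                  apply rho_congr
                  module
                rw [heq]
                exact (E 0).2.2.2.2.2
            _ = ε' * Λ / 4 := by ring
      refine ⟨⟨(Λ, ubar, wbar), hGoodbar⟩, fun a ha => ?_⟩
      have halt : a.val.1 < Λ :=
        lt_of_le_of_ne (le_csSup hSbdd ⟨a, ha, rfl⟩) (hatt a ha)
      obtain ⟨M, hM⟩ := exists_nat_one_div_lt (sub_pos.2 halt)
      have h1 : a.val.1 ≤ (E M).val.1 := by
        have := hEl M
        linarith
      have haj : Rel p q s v ε' a.val (E M).val := by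
        rcases eq_or_ne a (E M) with h | hne
        · rw [h]; exact rel_refl p q s v ε' _
        rcases hc ha (hEc M) hne with h | h
        · exact h
        · exact rel_flip p q s v ε' h h1
      exact rel_trans p q s v ε' haj
        ⟨le_csSup hSbdd ⟨E M, hEc M, rfl⟩, hkeyU M, hkeyW M⟩
  obtain ⟨m, hmax⟩ := exists_maximal_of_chains_bounded hchains
    (fun hab hbc => rel_trans p q s v ε' hab hbc)
  have hGm := m.2
  have hl1 : m.val.1 = 1 := by
    by_contra hne
    have hlt1 : m.val.1 < 1 := lt_of_le_of_ne hGm.2.1 hne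
    have hwV : m.val.2.2 ∈ V := by
      apply hball m.val.1 hGm.1 hGm.2.1
      calc frechetRho q m.val.2.2 (y + m.val.1 • v) ≤ ε' * m.val.1 / 4 := hGm.2.2.2.2
        _ ≤ ε' * 1 / 4 := by
            have := mul_le_mul_of_nonneg_left hGm.2.1 hε'.le
            linarith
        _ < ε' := by linarith
        _ ≤ ρ₀ := min_le_right _ _
    have hxuU : x + m.val.2.1 ∈ U := by
      apply hUx
      intro n
      exact le_trans (hGm.2.2.1 n) (mul_le_of_le_one_left (hs n) hGm.2.1)
    have hvmem : (1 - m.val.1) • v ∈ PiS q (fun n => κ * ((1 - m.val.1) * s n)) := by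
      intro n
      rw [map_smul_eq_mul, Real.norm_eq_abs,
        abs_of_nonneg (by linarith : (0:ℝ) ≤ 1 - m.val.1)]
      calc (1 - m.val.1) * q n v ≤ (1 - m.val.1) * (κ * s n) :=
            mul_le_mul_of_nonneg_left (hv n) (by linarith)
        _ = κ * ((1 - m.val.1) * s n) := by ring
    obtain ⟨t, a, z, htpos, ht0, haA, hzF, hratio⟩ :=
      hD (x + m.val.2.1) m.val.2.2 hGm.2.2.2.1 hxuU hwV (fun n => (1 - m.val.1) * s n)
        (fun n => mul_nonneg (by linarith) (hs n)) hvmem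
    have hη : 0 < ε' * (1 - m.val.1) / 4 := by
      have h1 : (0:ℝ) < 1 - m.val.1 := by linarith
      positivity
    obtain ⟨k, hk1, hk2⟩ :=
      ((hratio.eventually_lt_const hη).and (ht0.eventually_lt_const one_pos)).exists
    have htk := htpos k
    have hρk : frechetRho q (z k) (m.val.2.2 + (t k * (1 - m.val.1)) • v)
        < ε' * (1 - m.val.1) / 4 * t k := by
      have h := (div_lt_iff₀ htk).1 hk1
      rwa [smul_smul] at h
    have hΔ0 : 0 < t k * (1 - m.val.1) := mul_pos htk (by linarith)
    have hGe' : Good p q F x y s v ε'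
        (m.val.1 + t k * (1 - m.val.1), m.val.2.1 + t k • a k, z k) := by
      refine ⟨by simp only; linarith [hGm.1], by simp only; nlinarith [hk2.le],
        fun n => ?_, ?_, ?_⟩
      · simp only
        calc p n (m.val.2.1 + t k • a k) ≤ p n m.val.2.1 + p n (t k • a k) :=
              map_add_le_add _ _ _
          _ ≤ m.val.1 * s n + t k * ((1 - m.val.1) * s n) := by
              rw [map_smul_eq_mul, Real.norm_eq_abs, abs_of_pos htk]
              exact add_le_add (hGm.2.2.1 n)
                (mul_le_mul_of_nonneg_left (haA k n) htk.le)
          _ = (m.val.1 + t k * (1 - m.val.1)) * s n := by ring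
      · simp only
        have h := hzF k
        rwa [add_assoc] at h
      · simp only
        calc frechetRho q (z k) (y + (m.val.1 + t k * (1 - m.val.1)) • v)
            ≤ frechetRho q (z k) (m.val.2.2 + (t k * (1 - m.val.1)) • v)
              + frechetRho q (m.val.2.2 + (t k * (1 - m.val.1)) • v)
                (y + (m.val.1 + t k * (1 - m.val.1)) • v) := rho_triangle _ _ _ _
          _ ≤ ε' * (1 - m.val.1) / 4 * t k + ε' * m.val.1 / 4 := by
              refine add_le_add hρk.le ?_
              have heq : frechetRho q (m.val.2.2 + (t k * (1 - m.val.1)) • v)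
                  (y + (m.val.1 + t k * (1 - m.val.1)) • v)
                  = frechetRho q m.val.2.2 (y + m.val.1 • v) := by
                apply rho_congr
                module
              rw [heq]
              exact hGm.2.2.2.2
          _ = ε' * (m.val.1 + t k * (1 - m.val.1)) / 4 := by ring
    have hRme' : Rel p q s v ε' m.val
        (m.val.1 + t k * (1 - m.val.1), m.val.2.1 + t k • a k, z k) := by
      refine ⟨by simp only; linarith, fun n => ?_, ?_⟩
      · simp only
        have heq : (m.val.2.1 + t k • a k) - m.val.2.1 = t k • a k := by abel
        rw [heq, map_smul_eq_mul, Real.norm_eq_abs, abs_of_pos htk]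
        have heq2 : m.val.1 + t k * (1 - m.val.1) - m.val.1 = t k * (1 - m.val.1) := by ring
        rw [heq2]
        calc t k * p n (a k) ≤ t k * ((1 - m.val.1) * s n) :=
              mul_le_mul_of_nonneg_left (haA k n) htk.le
          _ = t k * (1 - m.val.1) * s n := by ring
      · simp only
        have heq2 : m.val.1 + t k * (1 - m.val.1) - m.val.1 = t k * (1 - m.val.1) := by ring
        rw [heq2]
        calc frechetRho q (z k) (m.val.2.2 + (t k * (1 - m.val.1)) • v)
            ≤ ε' * (1 - m.val.1) / 4 * t k := hρk.le
          _ = ε' * (t k * (1 - m.val.1)) / 4 := by ring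
    have hback := (hmax ⟨_, hGe'⟩ hRme').1
    simp only at hback
    linarith
  refine ⟨m.val.2.2, ?_, ?_⟩
  · refine Set.mem_iUnion₂.2 ⟨m.val.2.1, fun n => ?_, hGm.2.2.2.1⟩
    have h := hGm.2.2.1 n
    rw [hl1, one_mul] at h
    exact h
  · have h := hGm.2.2.2.2
    rw [hl1, one_smul] at h
    calc frechetRho q m.val.2.2 (y + v) ≤ ε' * 1 / 4 := h
      _ < ε' := by linarith
      _ ≤ ε := min_le_left _ _
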